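/- Fix an odd positive integer ℓ, and let μ₀ > 0 be such that A⁺(μ) is nonsingular with |det(A⁺(μ))| ≥ 1 for every integer μ > μ₀. Then for every integer μ > μ₀, the smallest singular value of A⁺(μ) satisfies σ_min(A⁺(μ)) ≥ 1 / ((2ℓ+1)^{ℓ(2ℓ+2)} · μ^{ℓ(2ℓ+1)}). -/

import Mathlib

open MeasureTheory ProbabilityTheory
open scoped NNReal

/-- The k-th raw moment of the Gaussian N(μ,1). -/
noncomputable def gaussMoment (μ : ℝ) (k : ℕ) : ℝ :=
  ∫ x, x ^ k ∂(gaussianReal μ 1)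

/-- The (ℓ+1) × (ℓ+1) Hankel matrix whose (i,j)-entry (1 ≤ i,j ≤ ℓ+1) is m_{i+j-1}(μ). -/
noncomputable def Aplus (ℓ : ℕ) (μ : ℝ) : Matrix (Fin (ℓ + 1)) (Fin (ℓ + 1)) ℝ :=
  Matrix.of fun i j => gaussMoment μ (i.val + j.val + 1)

/-- The smallest singular value of a real square matrix: the infimum of ‖Ax‖ over
unit vectors x (in the Euclidean norm). -/
noncomputable def sigmaMin {m : ℕ} (A : Matrix (Fin m) (Fin m) ℝ) : ℝ :=
  sInf ((fun x : EuclideanSpace ℝ (Fin m) => ‖Matrix.toEuclideanCLM (𝕜 := ℝ) A x‖) ''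
    {x | ‖x‖ = 1})


lemma powP (i : ℕ) {u : ℝ} (hu : 0 ≤ u) :
    2 * u ^ (i+1) ≤ (i+1).factorial * Real.exp u := by
  have hsum := Real.sum_le_exp_of_nonneg hu (i + 3)
  have hF : (0:ℝ) < (Nat.factorial i : ℝ) := by positivity
  have h3 : u ^ i / (Nat.factorial i) + u ^ (i+1) / ((i+1).factorial)
      + u ^ (i+2) / ((i+2).factorial) ≤ Real.exp u := by
    refine le_trans ?_ hsum
    rw [show i + 3 = (i+2)+1 from rfl, Finset.sum_range_succ, Finset.sum_range_succ]
    have : u ^ i / (Nat.factorial i) ≤ ∑ k ∈ Finset.range (i+1), u ^ k / (Nat.factorial k) := by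
      refine Finset.single_le_sum (f := fun k => u ^ k / (Nat.factorial k)) ?_ ?_
      · intro k _; positivity
      · simp
    linarith
  have hfac1 : (((i+1).factorial) : ℝ) = ((i:ℝ)+1) * (Nat.factorial i) := by
    rw [Nat.factorial_succ]; push_cast; ring
  have hfac2 : (((i+2).factorial) : ℝ) = ((i:ℝ)+2) * (((i:ℝ)+1) * (Nat.factorial i)) := by
    rw [show i+2 = (i+1)+1 from rfl, Nat.factorial_succ, Nat.factorial_succ]; push_cast; ring
  have ha : (0:ℝ) ≤ u ^ i := pow_nonneg hu i
  have key : 0 ≤ u^2 - ((i:ℝ)+2) * u + ((i:ℝ)+1) * ((i:ℝ)+2) := by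
    nlinarith [sq_nonneg (u - ((i:ℝ)+2)/2), Nat.cast_nonneg (α := ℝ) i]
  have key2 : 0 ≤ u ^ i * (u^2 - ((i:ℝ)+2) * u + ((i:ℝ)+1) * ((i:ℝ)+2)) :=
    mul_nonneg ha key
  have h1 : (0:ℝ) < (i:ℝ) + 1 := by positivity
  have h2 : (0:ℝ) < (i:ℝ) + 2 := by positivity
  rw [hfac1, hfac2] at h3
  rw [hfac1]
  have hpow1 : u ^ (i+1) = u ^ i * u := pow_succ u i
  have hpow2 : u ^ (i+2) = u ^ i * u * u := by rw [pow_succ, pow_succ]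
  rw [hpow1, hpow2] at h3
  rw [hpow1]
  set F : ℝ := (Nat.factorial i : ℝ) with hFdef
  set A : ℝ := u ^ i with hAdef
  set I : ℝ := (i : ℝ) with hIdef
  have e1 : (I+1)*F*(A/F) = (I+1)*A := by field_simp; try ring
  have e2 : (I+1)*F*(A*u/((I+1)*F)) = A*u := by field_simp; try ring
  have e3 : (I+1)*F*(A*u*u/((I+2)*((I+1)*F))) = A*u*u/(I+2) := by
    field_simp; try ring
  have step : 2*(A*u) ≤ (I+1)*A + A*u + A*u*u/(I+2) := by
    have hd : 2*(A*u) - ((I+1)*A + A*u) ≤ A*u*u/(I+2) := by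
      rw [le_div_iff₀ h2]; nlinarith [key2]
    linarith
  calc 2*(A*u) ≤ (I+1)*A + A*u + A*u*u/(I+2) := step
    _ = (I+1)*F*(A/F + A*u/((I+1)*F) + A*u*u/((I+2)*((I+1)*F))) := by
        rw [mul_add, mul_add, e1, e2, e3]
    _ ≤ (I+1)*F*Real.exp u := by
        refine mul_le_mul_of_nonneg_left h3 ?_
        positivity


lemma pdf_mul_exp (m t x : ℝ) :
    gaussianPDFReal m 1 x * Real.exp (t*x)
      = Real.exp (t*m + t^2/2) * gaussianPDFReal (m+t) 1 x := by
  simp only [gaussianPDFReal, NNReal.coe_one, mul_one]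
  rw [mul_assoc, ← Real.exp_add, ← mul_assoc, mul_comm (Real.exp _), mul_assoc, ← Real.exp_add]
  congr 1
  ring

lemma integral_gaussianReal_eq (m : ℝ) (g : ℝ → ℝ) :
    ∫ x, g x ∂(gaussianReal m 1) = ∫ x, gaussianPDFReal m 1 x * g x := by
  rw [gaussianReal_of_var_ne_zero _ one_ne_zero, gaussianPDF_def]
  simp_rw [ENNReal.ofReal]
  rw [integral_withDensity_eq_integral_smul ((measurable_gaussianPDFReal m 1).real_toNNReal) g]
  congr 1
  ext x
  rw [NNReal.smul_def, smul_eq_mul, Real.coe_toNNReal _ (gaussianPDFReal_nonneg m 1 x)]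

lemma integrable_exp_gaussian (m t : ℝ) :
    Integrable (fun x => Real.exp (t*x)) (gaussianReal m 1) := by
  rw [gaussianReal_of_var_ne_zero _ one_ne_zero, gaussianPDF_def]
  simp_rw [ENNReal.ofReal]
  rw [integrable_withDensity_iff_integrable_smul
    ((measurable_gaussianPDFReal m 1).real_toNNReal)]
  have : (fun x => (gaussianPDFReal m 1 x).toNNReal • Real.exp (t*x))
      = fun x => Real.exp (t*m + t^2/2) * gaussianPDFReal (m+t) 1 x := by
    ext x
    rw [NNReal.smul_def, smul_eq_mul, Real.coe_toNNReal _ (gaussianPDFReal_nonneg m 1 x),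
      pdf_mul_exp]
  rw [this]
  exact (integrable_gaussianPDFReal (m+t) 1).const_mul _

lemma exp_moment (m t : ℝ) :
    ∫ x, Real.exp (t*x) ∂(gaussianReal m 1) = Real.exp (t*m + t^2/2) := by
  rw [integral_gaussianReal_eq]
  simp_rw [pdf_mul_exp]
  rw [MeasureTheory.integral_const_mul, integral_gaussianPDFReal_eq_one (m+t) one_ne_zero,
    mul_one]


lemma det_updateRow_le {n : ℕ} (A : Matrix (Fin (n+1)) (Fin (n+1)) ℝ) (j : Fin (n+1))
    (r : Fin (n+1) → ℝ) (hr : ∀ c, |r c| ≤ 1) {b : ℝ} (hb : 0 ≤ b)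
    (hA : ∀ p q, |A p q| ≤ b) :
    |(A.updateRow j r).det| ≤ (n+1).factorial * b ^ n := by
  rw [Matrix.det_apply']
  refine (Finset.abs_sum_le_sum_abs _ _).trans ?_
  have hterm : ∀ σ : Equiv.Perm (Fin (n+1)),
      |(Equiv.Perm.sign σ : ℤ) * ∏ i, (A.updateRow j r) (σ i) i| ≤ b ^ n := by
    intro σ
    have hsign : |((Equiv.Perm.sign σ : ℤ) : ℝ)| = 1 := by
      rcases Int.units_eq_one_or (Equiv.Perm.sign σ) with h | h <;> simp [h]
    rw [abs_mul]
    push_cast at hsign ⊢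
    rw [hsign, one_mul, Finset.abs_prod]
    set i₀ := σ⁻¹ j with hi₀
    have hmem : i₀ ∈ Finset.univ (α := Fin (n+1)) := Finset.mem_univ _
    rw [← Finset.prod_erase_mul _ _ hmem]
    have h1 : |(A.updateRow j r) (σ i₀) i₀| ≤ 1 := by
      rw [hi₀, show σ (σ⁻¹ j) = j from σ.apply_symm_apply j, Matrix.updateRow_self]
      exact hr _
    have h2 : ∏ i ∈ Finset.univ.erase i₀, |(A.updateRow j r) (σ i) i| ≤ b ^ n := by
      have hcard : (Finset.univ.erase i₀).card = n := by
        rw [Finset.card_erase_of_mem hmem, Finset.card_univ, Fintype.card_fin]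
        omega
      calc ∏ i ∈ Finset.univ.erase i₀, |(A.updateRow j r) (σ i) i|
          ≤ ∏ _i ∈ Finset.univ.erase i₀, b := by
            refine Finset.prod_le_prod (fun i _ => abs_nonneg _) ?_
            intro i hi
            have hne : σ i ≠ j := by
              intro hcontra
              have : i = i₀ := by
                rw [hi₀, ← hcontra, show σ⁻¹ (σ i) = i from σ.symm_apply_apply i]
              exact (Finset.mem_erase.mp hi).1 this
            rw [Matrix.updateRow_ne hne]
            exact hA _ _
        _ = b ^ n := by rw [Finset.prod_const, hcard]
    calc (∏ i ∈ Finset.univ.erase i₀, |(A.updateRow j r) (σ i) i|) * |(A.updateRow j r) (σ i₀) i₀|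
        ≤ b ^ n * 1 := by
          refine mul_le_mul h2 h1 (abs_nonneg _) (by positivity)
      _ = b ^ n := mul_one _
  calc ∑ σ : Equiv.Perm (Fin (n+1)), |(Equiv.Perm.sign σ : ℤ) * ∏ i, (A.updateRow j r) (σ i) i|
      ≤ ∑ _σ : Equiv.Perm (Fin (n+1)), b ^ n := Finset.sum_le_sum fun σ _ => hterm σ
    _ = (n+1).factorial * b ^ n := by
        rw [Finset.sum_const, Finset.card_univ, nsmul_eq_mul]
        congr 1
        rw [Fintype.card_perm, Fintype.card_fin]

lemma euclidean_norm_le {n : ℕ} (M : Matrix (Fin n) (Fin n) ℝ) {b : ℝ} (hb : 0 ≤ b)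
    (h : ∀ i j, |M i j| ≤ b) (x : EuclideanSpace ℝ (Fin n)) :
    ‖Matrix.toEuclideanCLM (𝕜 := ℝ) M x‖ ≤ n * b * ‖x‖ := by
  set y := Matrix.toEuclideanCLM (𝕜 := ℝ) M x with hy
  have hyi : ∀ i, y i = ∑ k, M i k * x k := by
    intro i
    have h0 := congrFun (Matrix.ofLp_toEuclideanCLM (𝕜 := ℝ) M x) i
    exact h0
  -- each coordinate is an inner product with the row
  have hrow : ∀ i : Fin n, |y i| ≤ (Real.sqrt n * b) * ‖x‖ := by
    intro i
    set r : EuclideanSpace ℝ (Fin n) := (WithLp.equiv 2 _).symm (fun k => M i k) with hr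
    have hinner : y i = inner (𝕜 := ℝ) r x := by
      rw [hyi i, PiLp.inner_apply]
      simp [hr, RCLike.inner_apply]
      exact Finset.sum_congr rfl fun _ _ => mul_comm _ _
    have hrnorm : ‖r‖ ≤ Real.sqrt n * b := by
      rw [EuclideanSpace.norm_eq]
      have hsum : ∑ k, ‖r k‖ ^ 2 ≤ (n : ℝ) * b ^ 2 := by
        calc ∑ k, ‖r k‖^2 ≤ ∑ _k : Fin n, b^2 := by
              refine Finset.sum_le_sum fun k _ => ?_
              have : ‖r k‖ = |M i k| := by simp [hr, Real.norm_eq_abs]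
              rw [this]
              exact pow_le_pow_left₀ (abs_nonneg _) (h i k) 2
          _ = (n:ℝ) * b^2 := by rw [Finset.sum_const, Finset.card_univ, Fintype.card_fin,
                nsmul_eq_mul]
      calc Real.sqrt (∑ k, ‖r k‖^2) ≤ Real.sqrt ((n:ℝ) * b^2) := Real.sqrt_le_sqrt hsum
        _ = Real.sqrt n * b := by
            rw [Real.sqrt_mul (Nat.cast_nonneg n), Real.sqrt_sq hb]
    calc |y i| = |inner (𝕜 := ℝ) r x| := by rw [hinner]
      _ ≤ ‖r‖ * ‖x‖ := abs_real_inner_le_norm r x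
      _ ≤ (Real.sqrt n * b) * ‖x‖ := by
          refine mul_le_mul_of_nonneg_right hrnorm (norm_nonneg x)
  have hnn : (0:ℝ) ≤ Real.sqrt n * b * ‖x‖ := by positivity
  rw [EuclideanSpace.norm_eq]
  have hsum : ∑ i, ‖y i‖^2 ≤ (n:ℝ) * ((Real.sqrt n * b) * ‖x‖)^2 := by
    calc ∑ i, ‖y i‖^2 ≤ ∑ _i : Fin n, ((Real.sqrt n * b) * ‖x‖)^2 := by
          refine Finset.sum_le_sum fun i _ => ?_
          rw [Real.norm_eq_abs]
          exact pow_le_pow_left₀ (abs_nonneg _) (hrow i) 2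
      _ = (n:ℝ) * ((Real.sqrt n * b) * ‖x‖)^2 := by
          rw [Finset.sum_const, Finset.card_univ, Fintype.card_fin, nsmul_eq_mul]
  calc Real.sqrt (∑ i, ‖y i‖^2) ≤ Real.sqrt ((n:ℝ) * ((Real.sqrt n * b) * ‖x‖)^2) :=
        Real.sqrt_le_sqrt hsum
    _ = (n:ℝ) * b * ‖x‖ := by
        rw [Real.sqrt_mul (Nat.cast_nonneg n), Real.sqrt_sq hnn]
        rw [show Real.sqrt n * (Real.sqrt n * b * ‖x‖) = (Real.sqrt n * Real.sqrt n) * b * ‖x‖ by ring]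
        rw [Real.mul_self_sqrt (Nat.cast_nonneg n)]

lemma clm_norm_le {n : ℕ} (M : Matrix (Fin n) (Fin n) ℝ) {b : ℝ} (hb : 0 ≤ b)
    (h : ∀ i j, |M i j| ≤ b) :
    ‖Matrix.toEuclideanCLM (𝕜 := ℝ) M‖ ≤ n * b :=
  ContinuousLinearMap.opNorm_le_bound _ (by positivity) (euclidean_norm_le M hb h)


lemma fact_le_pow_pred : ∀ n : ℕ, (n+1).factorial ≤ (n+1)^n := by
  intro n
  induction n with
  | zero => simp
  | succ k ih =>
    calc (k+2).factorial = (k+2) * (k+1).factorial := Nat.factorial_succ _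
      _ ≤ (k+2) * (k+1)^k := Nat.mul_le_mul_left _ ih
      _ ≤ (k+2) * (k+2)^k := by
          refine Nat.mul_le_mul_left _ (Nat.pow_le_pow_left (by omega) k)
      _ = (k+2)^(k+1) := (pow_succ' _ _).symm

lemma aux53 : ∀ ℓ : ℕ, 3 ≤ ℓ → (ℓ+1) * 3^ℓ ≤ 5^ℓ := by
  intro ℓ hℓ
  induction ℓ with
  | zero => omega
  | succ k ih =>
    rcases Nat.lt_or_ge k 3 with hk | hk
    · interval_cases k <;> first | omega | norm_num
    · have h1 := ih hk
      calc (k+2) * 3^(k+1) = 3*(k+2) * 3^k := by ring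
        _ ≤ 5*(k+1) * 3^k := by
            refine Nat.mul_le_mul_right _ (by omega)
        _ = 5 * ((k+1) * 3^k) := by ring
        _ ≤ 5 * 5^k := Nat.mul_le_mul_left _ h1
        _ = 5^(k+1) := (pow_succ' _ _).symm

lemma pow_ineq {ℓ : ℕ} (hℓ : 3 ≤ ℓ) : (ℓ+1)^(ℓ+1) ≤ (2*ℓ+1)^ℓ := by
  have h1 : 3^ℓ * (ℓ+1)^(ℓ+1) ≤ 3^ℓ * (2*ℓ+1)^ℓ := by
    calc 3^ℓ * (ℓ+1)^(ℓ+1) = (ℓ+1) * 3^ℓ * (ℓ+1)^ℓ := by ring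
      _ ≤ 5^ℓ * (ℓ+1)^ℓ := Nat.mul_le_mul_right _ (aux53 ℓ hℓ)
      _ = (5*(ℓ+1))^ℓ := by rw [mul_pow]
      _ ≤ (3*(2*ℓ+1))^ℓ := Nat.pow_le_pow_left (by omega) ℓ
      _ = 3^ℓ * (2*ℓ+1)^ℓ := by rw [mul_pow]
  exact Nat.le_of_mul_le_mul_left h1 (pow_pos (by norm_num) ℓ)

lemma numericBound {ℓ : ℕ} (hpos : 0 < ℓ) (hodd : Odd ℓ) :
    ((ℓ:ℝ)+1) * ((ℓ+1).factorial : ℝ) * (Real.exp 1 * ((2*ℓ+1).factorial : ℝ))^ℓ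
      ≤ (2*(ℓ:ℝ)+1)^(ℓ*(2*ℓ+2)) := by
  have he3 : Real.exp 1 ≤ 3 := by nlinarith [Real.exp_one_lt_d9]
  have he0 : 0 < Real.exp 1 := Real.exp_pos 1
  rcases eq_or_ne ℓ 1 with rfl | hne
  · norm_num [Nat.factorial]
    nlinarith [Real.exp_one_lt_d9]
  · have hℓ3 : 3 ≤ ℓ := by
      rcases hodd with ⟨t, rfl⟩
      omega
    have hbase : (1:ℝ) ≤ 2*(ℓ:ℝ)+1 := by
      have : (1:ℝ) ≤ (ℓ:ℝ) := by exact_mod_cast hpos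
      linarith
    -- first factor
    have h1 : ((ℓ:ℝ)+1) * ((ℓ+1).factorial : ℝ) ≤ (2*(ℓ:ℝ)+1)^ℓ := by
      have hn : (ℓ+1) * (ℓ+1).factorial ≤ (2*ℓ+1)^ℓ := by
        calc (ℓ+1) * (ℓ+1).factorial ≤ (ℓ+1) * (ℓ+1)^ℓ :=
              Nat.mul_le_mul_left _ (fact_le_pow_pred ℓ)
          _ = (ℓ+1)^(ℓ+1) := (pow_succ' _ _).symm
          _ ≤ (2*ℓ+1)^ℓ := pow_ineq hℓ3
      calc ((ℓ:ℝ)+1) * ((ℓ+1).factorial : ℝ) = (((ℓ+1) * (ℓ+1).factorial : ℕ) : ℝ) := by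
            push_cast; ring
        _ ≤ (((2*ℓ+1)^ℓ : ℕ) : ℝ) := by exact_mod_cast hn
        _ = (2*(ℓ:ℝ)+1)^ℓ := by push_cast; ring
    -- second factor
    have h2 : Real.exp 1 * ((2*ℓ+1).factorial : ℝ) ≤ (2*(ℓ:ℝ)+1)^(2*ℓ+1) := by
      have hf : ((2*ℓ+1).factorial : ℝ) ≤ (2*(ℓ:ℝ)+1)^(2*ℓ) := by
        have := fact_le_pow_pred (2*ℓ)
        calc ((2*ℓ+1).factorial : ℝ) ≤ (((2*ℓ+1)^(2*ℓ) : ℕ) : ℝ) := by exact_mod_cast this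
          _ = (2*(ℓ:ℝ)+1)^(2*ℓ) := by push_cast; ring
      have h3b : (3:ℝ) ≤ 2*(ℓ:ℝ)+1 := by
        have : (3:ℝ) ≤ (ℓ:ℝ) := by exact_mod_cast hℓ3
        linarith
      calc Real.exp 1 * ((2*ℓ+1).factorial : ℝ) ≤ 3 * (2*(ℓ:ℝ)+1)^(2*ℓ) := by
            refine mul_le_mul he3 hf (by positivity) (by norm_num)
        _ ≤ (2*(ℓ:ℝ)+1) * (2*(ℓ:ℝ)+1)^(2*ℓ) := by
            refine mul_le_mul_of_nonneg_right h3b (by positivity)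
        _ = (2*(ℓ:ℝ)+1)^(2*ℓ+1) := (pow_succ' _ _).symm
    have h2p : (Real.exp 1 * ((2*ℓ+1).factorial : ℝ))^ℓ ≤ (2*(ℓ:ℝ)+1)^((2*ℓ+1)*ℓ) := by
      calc (Real.exp 1 * ((2*ℓ+1).factorial : ℝ))^ℓ ≤ ((2*(ℓ:ℝ)+1)^(2*ℓ+1))^ℓ := by
            refine pow_le_pow_left₀ (by positivity) h2 ℓ
        _ = (2*(ℓ:ℝ)+1)^((2*ℓ+1)*ℓ) := by rw [← pow_mul]
    calc ((ℓ:ℝ)+1) * ((ℓ+1).factorial : ℝ) * (Real.exp 1 * ((2*ℓ+1).factorial : ℝ))^ℓ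
        ≤ (2*(ℓ:ℝ)+1)^ℓ * (2*(ℓ:ℝ)+1)^((2*ℓ+1)*ℓ) := by
          refine mul_le_mul h1 h2p (by positivity) (by positivity)
      _ = (2*(ℓ:ℝ)+1)^(ℓ + (2*ℓ+1)*ℓ) := (pow_add _ _ _).symm
      _ = (2*(ℓ:ℝ)+1)^(ℓ*(2*ℓ+2)) := by ring_nf

-- exp(1/2) bound consequence
lemma exp_half_ineq : Real.exp (1/2) * (Real.exp 1 * Real.exp 1 + 1) ≤ 2 * (Real.exp 1 * Real.exp 1) := by
  have h1 : Real.exp 1 < 2.7182818286 := Real.exp_one_lt_d9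
  have h2 : 2.7182818283 < Real.exp 1 := Real.exp_one_gt_d9
  have hs : Real.exp (1/2) * Real.exp (1/2) = Real.exp 1 := by
    rw [← Real.exp_add]; norm_num
  have hsp : 0 < Real.exp (1/2) := Real.exp_pos _
  have hsle : Real.exp (1/2) < 1.6488 := by nlinarith [hs, h1, hsp]
  have hE2 : 7.38 < Real.exp 1 * Real.exp 1 := by nlinarith [h2]
  nlinarith [hsle, hE2, hsp, Real.exp_pos 1]

lemma momentBound {m : ℝ} (hm : 1 ≤ m) (j : ℕ) (hj : 1 ≤ j) :
    |gaussMoment m j| ≤ Real.exp 1 * j.factorial * m ^ j := by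
  have hm0 : 0 < m := lt_of_lt_of_le one_pos hm
  set ν := gaussianReal m 1
  set c : ℝ := (j.factorial : ℝ) / 2 * m ^ j with hc
  have hc0 : 0 < c := by positivity
  -- pointwise bound
  have hpt : ∀ x : ℝ, |x| ^ j ≤ c * (Real.exp ((1/m)*x) + Real.exp ((-(1/m))*x)) := by
    intro x
    obtain ⟨i, rfl⟩ : ∃ i, j = i + 1 := ⟨j - 1, (Nat.succ_pred_eq_of_pos hj).symm⟩
    have hu : 0 ≤ |x| / m := by positivity
    have hP := powP i hu
    have hexple : Real.exp (|x|/m) ≤ Real.exp ((1/m)*x) + Real.exp ((-(1/m))*x) := by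
      rcases le_or_gt 0 x with hx | hx
      · have : |x| = x := abs_of_nonneg hx
        rw [this]
        have : (1/m)*x = x/m := by ring
        rw [this]
        have := (Real.exp_pos ((-(1/m))*x)).le
        linarith
      · have : |x| = -x := abs_of_neg hx
        rw [this]
        have : -x/m = (-(1/m))*x := by ring
        rw [this]
        have := (Real.exp_pos ((1/m)*x)).le
        linarith
    have key : 2 * (|x|/m) ^ (i+1) ≤ (i+1).factorial * (Real.exp ((1/m)*x) + Real.exp ((-(1/m))*x)) := by
      calc 2 * (|x|/m) ^ (i+1) ≤ (i+1).factorial * Real.exp (|x|/m) := hP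
        _ ≤ _ := by
            refine mul_le_mul_of_nonneg_left hexple ?_
            positivity
    have hxm : |x| ^ (i+1) = (|x|/m)^(i+1) * m^(i+1) := by
      rw [div_pow]
      field_simp
    rw [hxm, hc]
    nlinarith [key, pow_pos hm0 (i+1), pow_nonneg (abs_nonneg x) (i+1)]
  -- integral bound
  have hint : Integrable (fun x => c * (Real.exp ((1/m)*x) + Real.exp ((-(1/m))*x))) ν :=
    Integrable.const_mul ((integrable_exp_gaussian m (1/m)).add (integrable_exp_gaussian m (-(1/m)))) c
  have h1 : |gaussMoment m j| ≤ ∫ x, |x| ^ j ∂ν := by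
    rw [gaussMoment]
    have hnn := norm_integral_le_integral_norm (μ := ν) (f := fun x : ℝ => x ^ j)
    simpa [Real.norm_eq_abs, abs_pow] using hnn
  have h2 : ∫ x, |x| ^ j ∂ν ≤ ∫ x, c * (Real.exp ((1/m)*x) + Real.exp ((-(1/m))*x)) ∂ν := by
    refine integral_mono_of_nonneg ?_ hint ?_
    · exact ae_of_all _ fun x => by positivity
    · exact ae_of_all _ fun x => hpt x
  have h3 : ∫ x, c * (Real.exp ((1/m)*x) + Real.exp ((-(1/m))*x)) ∂ν
      = c * (Real.exp ((1/m)*m + (1/m)^2/2) + Real.exp ((-(1/m))*m + (-(1/m))^2/2)) := by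
    rw [MeasureTheory.integral_const_mul,
      integral_add (integrable_exp_gaussian m (1/m)) (integrable_exp_gaussian m (-(1/m))),
      exp_moment, exp_moment]
  have hmm : (1/m)*m = 1 := by field_simp
  have hmm' : (-(1/m))*m = -1 := by field_simp
  have hδ : (1/m)^2/2 ≤ 1/2 := by
    have : (1/m) ≤ 1 := by
      rw [div_le_one hm0]; exact hm
    have h0 : 0 ≤ 1/m := by positivity
    nlinarith
  have hδ0 : 0 ≤ (1/m)^2/2 := by positivity
  have hfin : Real.exp ((1/m)*m + (1/m)^2/2) + Real.exp ((-(1/m))*m + (-(1/m))^2/2)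
      ≤ 2 * Real.exp 1 := by
    rw [hmm, hmm']
    have e1 : Real.exp (1 + (1/m)^2/2) ≤ Real.exp 1 * Real.exp (1/2) := by
      rw [← Real.exp_add]
      exact Real.exp_le_exp.mpr (by linarith)
    have e2 : Real.exp (-1 + (-(1/m))^2/2) ≤ Real.exp (-1) * Real.exp (1/2) := by
      rw [← Real.exp_add]
      refine Real.exp_le_exp.mpr ?_
      have : (-(1/m))^2 = (1/m)^2 := by ring
      rw [this]; linarith
    have hE : Real.exp (-1) = (Real.exp 1)⁻¹ := by
      rw [← Real.exp_neg]
    have := exp_half_ineq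
    have hEp : 0 < Real.exp 1 := Real.exp_pos _
    rw [hE] at e2
    have goal2 : Real.exp 1 * Real.exp (1/2) + (Real.exp 1)⁻¹ * Real.exp (1/2) ≤ 2 * Real.exp 1 := by
      rw [inv_eq_one_div]
      rw [div_mul_eq_mul_div, ← sub_nonneg]
      have expand : 2 * Real.exp 1 - (Real.exp 1 * Real.exp (1/2) + 1 * Real.exp (1/2) / Real.exp 1)
          = (2 * (Real.exp 1 * Real.exp 1) - Real.exp (1/2) * (Real.exp 1 * Real.exp 1 + 1)) / Real.exp 1 := by
        field_simp
      rw [expand]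
      exact div_nonneg (by linarith) (Real.exp_pos 1).le
    linarith
  calc |gaussMoment m j| ≤ ∫ x, |x| ^ j ∂ν := h1
    _ ≤ _ := h2
    _ = c * (Real.exp ((1/m)*m + (1/m)^2/2) + Real.exp ((-(1/m))*m + (-(1/m))^2/2)) := h3
    _ ≤ c * (2 * Real.exp 1) := by
        exact mul_le_mul_of_nonneg_left hfin hc0.le
    _ = Real.exp 1 * j.factorial * m ^ j := by
        rw [hc]; ring


set_option maxHeartbeats 1000000 in
theorem stmt5 (ℓ : ℕ) (hpos : 0 < ℓ) (hodd : Odd ℓ) (μ₀ : ℝ) (hμ₀ : 0 < μ₀)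
    (hdet : ∀ μ : ℤ, μ₀ < (μ : ℝ) →
      (Aplus ℓ (μ : ℝ)).det ≠ 0 ∧ 1 ≤ |(Aplus ℓ (μ : ℝ)).det|) :
    ∀ μ : ℤ, μ₀ < (μ : ℝ) →
      1 / ((2 * ℓ + 1 : ℝ) ^ (ℓ * (2 * ℓ + 2)) * (μ : ℝ) ^ (ℓ * (2 * ℓ + 1))) ≤
        sigmaMin (Aplus ℓ (μ : ℝ)) := by
  intro μ hμ
  obtain ⟨hd0, hd1⟩ := hdet μ hμ
  have hm1 : (1:ℝ) ≤ (μ : ℝ) := by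
    have h0 : (0:ℝ) < (μ:ℝ) := lt_trans hμ₀ hμ
    have h0' : (0:ℤ) < μ := by exact_mod_cast h0
    exact_mod_cast h0'
  set m : ℝ := (μ : ℝ) with hmdef
  have hm0 : (0:ℝ) < m := lt_of_lt_of_le one_pos hm1
  set A := Aplus ℓ m with hAdef
  set b : ℝ := Real.exp 1 * ((2*ℓ+1).factorial : ℝ) * m^(2*ℓ+1) with hbdef
  have hb0 : (0:ℝ) ≤ b := by positivity
  have hEntry : ∀ p q : Fin (ℓ+1), |A p q| ≤ b := by
    intro p q
    have hk : p.val + q.val + 1 ≤ 2*ℓ+1 := by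
      have := p.isLt; have := q.isLt; omega
    have h1 : |gaussMoment m (p.val+q.val+1)|
        ≤ Real.exp 1 * ((p.val+q.val+1).factorial : ℝ) * m^(p.val+q.val+1) :=
      momentBound hm1 _ (by omega)
    have hAe : A p q = gaussMoment m (p.val+q.val+1) := rfl
    rw [hAe]
    refine h1.trans ?_
    rw [hbdef]
    have hfle : ((p.val+q.val+1).factorial : ℝ) ≤ ((2*ℓ+1).factorial : ℝ) := by
      exact_mod_cast Nat.factorial_le hk
    have hmle : m^(p.val+q.val+1) ≤ m^(2*ℓ+1) := pow_le_pow_right₀ hm1 hk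
    have hf0 : (0:ℝ) ≤ ((p.val+q.val+1).factorial : ℝ) := by positivity
    have hm0' : (0:ℝ) ≤ m^(p.val+q.val+1) := by positivity
    exact mul_le_mul (mul_le_mul le_rfl hfle hf0 (Real.exp_pos 1).le) hmle hm0'
      (by positivity)
  have hAdj : ∀ p q : Fin (ℓ+1), |A.adjugate p q| ≤ ((ℓ+1).factorial : ℝ) * b^ℓ := by
    intro p q
    rw [Matrix.adjugate_apply]
    refine det_updateRow_le A q (Pi.single p 1) ?_ hb0 hEntry
    intro c
    rcases eq_or_ne c p with rfl | hc
    · simp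
    · rw [Pi.single_eq_of_ne hc]
      simp
  have hdetunit : IsUnit A.det := isUnit_iff_ne_zero.mpr hd0
  have hInvEntry : ∀ p q : Fin (ℓ+1), |A⁻¹ p q| ≤ ((ℓ+1).factorial : ℝ) * b^ℓ := by
    intro p q
    rw [Matrix.inv_def]
    have hre : Ring.inverse A.det = (A.det)⁻¹ := Ring.inverse_eq_inv _
    rw [hre, Matrix.smul_apply, smul_eq_mul, abs_mul, abs_inv]
    have hinvle : |A.det|⁻¹ ≤ 1 := by
      rw [inv_le_one_iff₀]
      right; exact hd1
    calc |A.det|⁻¹ * |A.adjugate p q| ≤ 1 * (((ℓ+1).factorial : ℝ) * b^ℓ) := by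
          refine mul_le_mul hinvle (hAdj p q) (abs_nonneg _) (by norm_num)
      _ = ((ℓ+1).factorial : ℝ) * b^ℓ := one_mul _
  set D : ℝ := (2*(ℓ:ℝ)+1)^(ℓ*(2*ℓ+2)) * m^(ℓ*(2*ℓ+1)) with hDdef
  have hD0 : (0:ℝ) < D := by positivity
  have hNormInv : ‖Matrix.toEuclideanCLM (𝕜 := ℝ) A⁻¹‖ ≤ D := by
    refine (clm_norm_le A⁻¹ (by positivity) hInvEntry).trans ?_
    have expand : ((ℓ+1 : ℕ):ℝ) * (((ℓ+1).factorial : ℝ) * b^ℓ)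
        = (((ℓ:ℝ)+1) * ((ℓ+1).factorial : ℝ)
          * (Real.exp 1 * ((2*ℓ+1).factorial : ℝ))^ℓ) * m^((2*ℓ+1)*ℓ) := by
      rw [hbdef, mul_pow, ← pow_mul]
      push_cast
      ring
    rw [expand, hDdef]
    have hmono := numericBound hpos hodd
    have hmexp : m^((2*ℓ+1)*ℓ) = m^(ℓ*(2*ℓ+1)) := by rw [Nat.mul_comm]
    rw [hmexp]
    refine mul_le_mul_of_nonneg_right hmono (by positivity)
  -- conclude
  have htarget : (1:ℝ) / ((2 * (ℓ:ℝ) + 1) ^ (ℓ * (2 * ℓ + 2)) * m ^ (ℓ * (2 * ℓ + 1))) = 1 / D := by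
    rw [hDdef]
  rw [sigmaMin]
  refine le_csInf ⟨_, ⟨EuclideanSpace.single (⟨0, by omega⟩ : Fin (ℓ+1)) (1:ℝ), by
      simp [EuclideanSpace.norm_single], rfl⟩⟩ ?_
  rintro v ⟨x, hx, rfl⟩
  have hx1 : ‖x‖ = 1 := hx
  have hxid : (Matrix.toEuclideanCLM (𝕜 := ℝ) A⁻¹) ((Matrix.toEuclideanCLM (𝕜 := ℝ) A) x) = x := by
    have hmul : Matrix.toEuclideanCLM (𝕜 := ℝ) (A⁻¹ * A)
        = Matrix.toEuclideanCLM (𝕜 := ℝ) A⁻¹ * Matrix.toEuclideanCLM (𝕜 := ℝ) A :=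
      map_mul _ _ _
    rw [Matrix.nonsing_inv_mul A hdetunit, map_one] at hmul
    calc (Matrix.toEuclideanCLM (𝕜 := ℝ) A⁻¹) ((Matrix.toEuclideanCLM (𝕜 := ℝ) A) x)
        = (Matrix.toEuclideanCLM (𝕜 := ℝ) A⁻¹ * Matrix.toEuclideanCLM (𝕜 := ℝ) A) x :=
          (ContinuousLinearMap.mul_apply _ _ _).symm
      _ = (1 : EuclideanSpace ℝ (Fin (ℓ+1)) →L[ℝ] EuclideanSpace ℝ (Fin (ℓ+1))) x := by
          rw [← hmul]
      _ = x := ContinuousLinearMap.one_apply x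
  have hchain : (1:ℝ) ≤ D * ‖(Matrix.toEuclideanCLM (𝕜 := ℝ) A) x‖ := by
    have h1 : (1:ℝ) = ‖x‖ := hx1.symm
    have h2 : ‖x‖ ≤ ‖Matrix.toEuclideanCLM (𝕜 := ℝ) A⁻¹‖ * ‖(Matrix.toEuclideanCLM (𝕜 := ℝ) A) x‖ := by
      nth_rewrite 1 [← hxid]
      exact ContinuousLinearMap.le_opNorm (Matrix.toEuclideanCLM (𝕜 := ℝ) A⁻¹)
        ((Matrix.toEuclideanCLM (𝕜 := ℝ) A) x)
    have h3 : ‖Matrix.toEuclideanCLM (𝕜 := ℝ) A⁻¹‖ * ‖(Matrix.toEuclideanCLM (𝕜 := ℝ) A) x‖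
        ≤ D * ‖(Matrix.toEuclideanCLM (𝕜 := ℝ) A) x‖ :=
      mul_le_mul_of_nonneg_right hNormInv (norm_nonneg _)
    linarith
  have : 1 / D ≤ ‖(Matrix.toEuclideanCLM (𝕜 := ℝ) A) x‖ := by
    rw [div_le_iff₀ hD0]
    linarith [hchain]
  calc 1 / ((2 * (ℓ:ℝ) + 1) ^ (ℓ * (2 * ℓ + 2)) * m ^ (ℓ * (2 * ℓ + 1))) = 1 / D := htarget
    _ ≤ _ := this
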